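/- For constants γ, β, Λ, C, D with γ + 12βΛ ≠ 0 and γ ≠ 0, the quadratic polynomial f(r) = −Λ r² + (C/γ) r + (D − 3βC²/γ²)/(γ + 12βΛ) satisfies γ f + γΛ r² − 6β (f f'' − (f')²/2) = C r + D for all r. -/

import Mathlib

lemma quad_deriv (a b c : ℝ) :
    deriv (fun s : ℝ => a * s ^ 2 + b * s + c) = fun r => 2 * a * r + b := by
  funext r
  have h1 : HasDerivAt (fun s : ℝ => a * s ^ 2 + b * s + c) (a * (2 * r) + b) r := by
    have := ((hasDerivAt_pow 2 r).const_mul a).add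
      (((hasDerivAt_id r).const_mul b).add_const c)
    simpa [add_assoc, Pi.add_def] using this
  rw [h1.deriv]; ring

lemma quad_deriv2 (a b c : ℝ) :
    iteratedDeriv 2 (fun s : ℝ => a * s ^ 2 + b * s + c) = fun _ => 2 * a := by
  rw [iteratedDeriv_succ, iteratedDeriv_one, quad_deriv]
  funext r
  have h1 : HasDerivAt (fun s : ℝ => 2 * a * s + b) (2 * a) r := by
    simpa using ((hasDerivAt_id r).const_mul (2 * a)).add_const b
  rw [h1.deriv]

/-- The Nariai quadratic polynomial
`f(r) = −Λ r² + (C/γ) r + (D − 3βC²/γ²)/(γ + 12βΛ)` satisfies the twice-integrated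
quadratic-gravity Kundt equation `γ f + γΛ r² − 6β (f f'' − (f')²/2) = C r + D`. -/
theorem nariai_exact_solution (γ β Λ C D : ℝ) (hγ : γ ≠ 0) (h12 : γ + 12 * β * Λ ≠ 0) :
    ∀ r : ℝ,
      γ * (fun s : ℝ => -Λ * s ^ 2 + (C / γ) * s + (D - 3 * β * C ^ 2 / γ ^ 2) / (γ + 12 * β * Λ)) r
        + γ * Λ * r ^ 2
        - 6 * β * ((fun s : ℝ => -Λ * s ^ 2 + (C / γ) * s + (D - 3 * β * C ^ 2 / γ ^ 2) / (γ + 12 * β * Λ)) r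
            * iteratedDeriv 2 (fun s : ℝ => -Λ * s ^ 2 + (C / γ) * s + (D - 3 * β * C ^ 2 / γ ^ 2) / (γ + 12 * β * Λ)) r
          - (deriv (fun s : ℝ => -Λ * s ^ 2 + (C / γ) * s + (D - 3 * β * C ^ 2 / γ ^ 2) / (γ + 12 * β * Λ)) r) ^ 2 / 2)
      = C * r + D := by
  intro r
  rw [quad_deriv, quad_deriv2]
  simp only
  field_simp
  linear_combination (γ ^ 2 * D * 2 - 6 * β * C ^ 2) * (mul_inv_cancel₀ h12)
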